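/- Every doubly stochastic positive map S : M_k → M_m has total support. Consequently, for every positive semidefinite Hermitian A ∈ M_k, rank(A)·m ≤ rank(S(A))·k. -/

import Mathlib

open Matrix BigOperators
open scoped ComplexOrder

section Helpers

lemma ds_support' {n : Type*} [Fintype n] [DecidableEq n] {M : Matrix n n ℝ}
    (hM : M ∈ doublyStochastic ℝ n) :
    (∃ σ : Equiv.Perm n, ∀ i, M i (σ i) ≠ 0) ∧
    (∀ p q, M p q ≠ 0 → ∃ σ : Equiv.Perm n, σ p = q ∧ ∀ i, M i (σ i) ≠ 0) := by
  obtain ⟨w, hw0, hw1, hwM⟩ := exists_eq_sum_perm_of_mem_doublyStochastic hM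
  have hpm : ∀ (τ : Equiv.Perm n) (i j : n), τ.permMatrix ℝ i j = if τ i = j then 1 else 0 := by
    intro τ i j
    simp [Equiv.Perm.permMatrix, PEquiv.toMatrix_apply, Equiv.toPEquiv_apply]
  have hentry : ∀ i j, M i j = ∑ τ : Equiv.Perm n, w τ * (if τ i = j then 1 else 0) := by
    intro i j
    rw [← hwM]
    simp only [Matrix.sum_apply, Matrix.smul_apply, hpm, smul_eq_mul]
  have key : ∀ σ : Equiv.Perm n, 0 < w σ → ∀ i, M i (σ i) ≠ 0 := by
    intro σ hσ i
    have h1 : (fun τ : Equiv.Perm n => w τ * if τ i = σ i then (1:ℝ) else 0) σ ≤ M i (σ i) := by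
      rw [hentry i (σ i)]
      exact Finset.single_le_sum
        (f := fun τ : Equiv.Perm n => w τ * if τ i = σ i then (1:ℝ) else 0)
        (fun τ _ => mul_nonneg (hw0 τ) (by split <;> norm_num)) (Finset.mem_univ σ)
    simp only [if_pos rfl, if_true, eq_self_iff_true, mul_one] at h1
    exact ne_of_gt (lt_of_lt_of_le hσ h1)
  constructor
  · have : ∃ σ : Equiv.Perm n, 0 < w σ := by
      by_contra h
      push_neg at h
      have : ∑ σ : Equiv.Perm n, w σ ≤ 0 := Finset.sum_nonpos (fun σ _ => h σ)
      rw [hw1] at this; linarith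
    obtain ⟨σ, hσ⟩ := this
    exact ⟨σ, key σ hσ⟩
  · intro p q hpq
    have : ∃ σ : Equiv.Perm n, σ p = q ∧ 0 < w σ := by
      by_contra h
      push_neg at h
      apply hpq
      rw [hentry p q]
      refine Finset.sum_eq_zero fun τ _ => ?_
      by_cases hτ : τ p = q
      · have h2 := h τ hτ
        simp [hτ, le_antisymm h2 (hw0 τ)]
      · simp [hτ]
    obtain ⟨σ, hσq, hσ⟩ := this
    exact ⟨σ, hσq, key σ hσ⟩


lemma trace_mul_vecMulVec' {n : Type*} [Fintype n] (M : Matrix n n ℂ) (w : n → ℂ) :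
    (M * Matrix.vecMulVec w (star w)).trace = star w ⬝ᵥ (M *ᵥ w) := by
  simp only [Matrix.trace, Matrix.diag, Matrix.mul_apply, Matrix.vecMulVec_apply,
    dotProduct, Matrix.mulVec, Pi.star_apply]
  refine Finset.sum_congr rfl fun a _ => ?_
  rw [Finset.mul_sum]
  refine Finset.sum_congr rfl fun b _ => ?_
  ring

lemma vecMulVec_posSemidef' {n : Type*} [Fintype n] (v : n → ℂ) :
    (Matrix.vecMulVec v (star v)).PosSemidef := by
  refine Matrix.PosSemidef.of_dotProduct_mulVec_nonneg ?_ ?_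
  · ext i j
    simp [Matrix.conjTranspose_apply, Matrix.vecMulVec_apply, mul_comm]
  · intro x
    have h : star x ⬝ᵥ (Matrix.vecMulVec v (star v) *ᵥ x) =
        (star x ⬝ᵥ v) * star (star x ⬝ᵥ v) := by
      simp only [dotProduct, Matrix.mulVec, Matrix.vecMulVec_apply, Pi.star_apply,
        dotProduct, star_sum, star_mul', star_star, Finset.mul_sum, Finset.sum_mul]
      rw [Finset.sum_comm]
      refine Finset.sum_congr rfl fun b _ => ?_
      refine Finset.sum_congr rfl fun a _ => ?_
      ring
    rw [h]
    exact mul_star_self_nonneg _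

lemma sum_vecMulVec_eq_one' {n : ℕ} (v : Fin n → Fin n → ℂ)
    (hv : ∀ i j, star (v i) ⬝ᵥ v j = if i = j then 1 else 0) :
    ∑ i, Matrix.vecMulVec (v i) (star (v i)) = 1 := by
  set V : Matrix (Fin n) (Fin n) ℂ := Matrix.of fun i j => v i j with hV
  have h1 : V * Vᴴ = 1 := by
    ext i j
    have := hv j i
    simp only [dotProduct, Pi.star_apply] at this
    simp only [Matrix.mul_apply, Matrix.conjTranspose_apply, hV, Matrix.of_apply,
      Matrix.one_apply]
    rw [show ((if i = j then (1:ℂ) else 0) = if j = i then 1 else 0) from by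
      simp [eq_comm], ← this]
    exact Finset.sum_congr rfl fun a _ => mul_comm _ _
  have h2 : Vᴴ * V = 1 := mul_eq_one_comm.mp h1
  ext a b
  have := congrArg (fun M => M b a) h2
  simp only [Matrix.mul_apply, Matrix.conjTranspose_apply, hV, Matrix.of_apply,
    Matrix.one_apply] at this
  simp only [Matrix.sum_apply, Matrix.vecMulVec_apply, Pi.star_apply, Matrix.one_apply]
  rw [show (∑ i, v i a * star (v i b)) = ∑ i, star (v i b) * v i a from
    Finset.sum_congr rfl fun i _ => mul_comm _ _, this]
  simp [eq_comm]

lemma unitary_diag_decomp' {n : Type*} [Fintype n] [DecidableEq n]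
    (U : Matrix n n ℂ) (d : n → ℂ) :
    U * Matrix.diagonal d * Uᴴ =
      ∑ c, d c • Matrix.vecMulVec (fun a => U a c) (star fun a => U a c) := by
  ext a b
  simp only [Matrix.mul_apply, Matrix.diagonal_apply, Matrix.conjTranspose_apply,
    Matrix.sum_apply, Matrix.smul_apply, Matrix.vecMulVec_apply, Pi.star_apply, smul_eq_mul]
  refine Finset.sum_congr rfl fun c _ => ?_
  have h : (∑ x, U a x * if x = c then d x else 0) = U a c * d c := by
    rw [Finset.sum_eq_single c]
    · simp
    · intro x _ hx; simp [hx]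
    · simp
  rw [h]
  ring

end Helpers

/-- A (possibly rectangular, as long as the index types have the same cardinality)
matrix has support if some generalized permutation diagonal has nonzero product. -/
def HasSupport {R C α : Type*} [Fintype R] [Fintype C] [CommMonoidWithZero α]
    (A : Matrix R C α) : Prop :=
  ∃ σ : R ≃ C, ∏ i, A i (σ i) ≠ 0

/-- Total support: every nonzero entry lies on a nonzero generalized permutation diagonal. -/
def HasTotalSupport {R C α : Type*} [Fintype R] [Fintype C] [CommMonoidWithZero α]
    (A : Matrix R C α) : Prop :=
  ∀ p q, A p q ≠ 0 → ∃ σ : R ≃ C, σ p = q ∧ ∏ i, A i (σ i) ≠ 0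

/-- The Kronecker product `A ⊗ 1_{m×k}` of `A ∈ M_{k×m}` with the all-ones matrix `1_{m×k}`. -/
def kronOnes {R C α : Type*} (A : Matrix R C α) : Matrix (R × C) (C × R) α :=
  Matrix.of fun p q => A p.1 q.1

/-- A rectangular matrix has support if `A ⊗ 1_{m×k}` has support. -/
def RectSupport {R C α : Type*} [Fintype R] [Fintype C] [CommMonoidWithZero α]
    (A : Matrix R C α) : Prop :=
  HasSupport (kronOnes A)

/-- A rectangular matrix has total support if `A ⊗ 1_{m×k}` has total support. -/
def RectTotalSupport {R C α : Type*} [Fintype R] [Fintype C] [CommMonoidWithZero α]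
    (A : Matrix R C α) : Prop :=
  HasTotalSupport (kronOnes A)

/-- A positive map `T : M_k → M_m` has support if for all orthonormal bases
`{v_i}` of `ℂ^k` and `{w_j}` of `ℂ^m`, the matrix `(tr(T(v_i v_i*) w_j w_j*))` has
support as a rectangular matrix. -/
def MapSupport {k m : ℕ}
    (T : Matrix (Fin k) (Fin k) ℂ → Matrix (Fin m) (Fin m) ℂ) : Prop :=
  ∀ (v : Fin k → Fin k → ℂ) (w : Fin m → Fin m → ℂ),
    (∀ i j, star (v i) ⬝ᵥ v j = if i = j then 1 else 0) →
    (∀ i j, star (w i) ⬝ᵥ w j = if i = j then 1 else 0) →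
    RectSupport (Matrix.of fun i j =>
      ((T (Matrix.vecMulVec (v i) (star (v i)))) *
        Matrix.vecMulVec (w j) (star (w j))).trace)

/-- A positive map `T : M_k → M_m` has total support if for all orthonormal bases
the matrix `(tr(T(v_i v_i*) w_j w_j*))` has total support. -/
def MapTotalSupport {k m : ℕ}
    (T : Matrix (Fin k) (Fin k) ℂ → Matrix (Fin m) (Fin m) ℂ) : Prop :=
  ∀ (v : Fin k → Fin k → ℂ) (w : Fin m → Fin m → ℂ),
    (∀ i j, star (v i) ⬝ᵥ v j = if i = j then 1 else 0) →
    (∀ i j, star (w i) ⬝ᵥ w j = if i = j then 1 else 0) →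
    RectTotalSupport (Matrix.of fun i j =>
      ((T (Matrix.vecMulVec (v i) (star (v i)))) *
        Matrix.vecMulVec (w j) (star (w j))).trace)

/-- `T` is doubly stochastic: `T(Id/√k) = Id/√m` and `T*(Id/√m) = Id/√k` (the latter
expressed through the trace inner product). -/
def IsDoublyStochasticMap {k m : ℕ}
    (T : Matrix (Fin k) (Fin k) ℂ → Matrix (Fin m) (Fin m) ℂ) : Prop :=
  T ((Real.sqrt k : ℂ)⁻¹ • 1) = (Real.sqrt m : ℂ)⁻¹ • 1 ∧
  ∀ X, (Real.sqrt m : ℂ)⁻¹ * (T X).trace = (Real.sqrt k : ℂ)⁻¹ * X.trace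

/-- Every doubly stochastic positive map has total support; consequently
`rank(A)·m ≤ rank(S(A))·k` for every positive semidefinite `A`. -/
theorem doublyStochastic_totalSupport {k m : ℕ}
    (S : Matrix (Fin k) (Fin k) ℂ →ₗ[ℂ] Matrix (Fin m) (Fin m) ℂ)
    (hSpos : ∀ A : Matrix (Fin k) (Fin k) ℂ, A.PosSemidef → (S A).PosSemidef)
    (hDS : IsDoublyStochasticMap (fun X => S X)) :
    MapTotalSupport (fun X => S X) ∧
      ∀ A : Matrix (Fin k) (Fin k) ℂ, A.PosSemidef →
        A.rank * m ≤ (S A).rank * k := by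
  -- degenerate cases
  rcases Nat.eq_zero_or_pos k with hk | hk
  · subst hk
    constructor
    · intro v w _ _ p q _
      exact p.1.elim0
    · intro A _
      have h0 : A.rank = 0 := Nat.le_zero.mp (A.rank_le_card_width.trans (by simp))
      simp [h0]
  rcases Nat.eq_zero_or_pos m with hm | hm
  · subst hm
    constructor
    · intro v w _ _ p q _
      exact p.2.elim0
    · intro A _
      simp
  -- main case
  have hsk : (0:ℝ) < Real.sqrt k := Real.sqrt_pos.mpr (by exact_mod_cast hk)
  have hsm : (0:ℝ) < Real.sqrt m := Real.sqrt_pos.mpr (by exact_mod_cast hm)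
  have hskC : (Real.sqrt k : ℂ) ≠ 0 := by exact_mod_cast hsk.ne'
  have hsmC : (Real.sqrt m : ℂ) ≠ 0 := by exact_mod_cast hsm.ne'
  have main : ∀ (v : Fin k → Fin k → ℂ) (w : Fin m → Fin m → ℂ),
      (∀ i j, star (v i) ⬝ᵥ v j = if i = j then 1 else 0) →
      (∀ i j, star (w i) ⬝ᵥ w j = if i = j then 1 else 0) →
      (∃ σ : (Fin k × Fin m) ≃ (Fin m × Fin k),
        ∀ p : Fin k × Fin m,
          ((S (Matrix.vecMulVec (v p.1) (star (v p.1)))) *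
            Matrix.vecMulVec (w ((σ p).1)) (star (w ((σ p).1)))).trace ≠ 0) ∧
      RectTotalSupport (Matrix.of fun i j =>
        ((S (Matrix.vecMulVec (v i) (star (v i)))) *
          Matrix.vecMulVec (w j) (star (w j))).trace) := by
    intro v w hv hw
    set P : Fin k → Matrix (Fin k) (Fin k) ℂ :=
      fun i => Matrix.vecMulVec (v i) (star (v i)) with hP
    set Q : Fin m → Matrix (Fin m) (Fin m) ℂ :=
      fun j => Matrix.vecMulVec (w j) (star (w j)) with hQ
    set B : Matrix (Fin k) (Fin m) ℂ :=
      Matrix.of fun i j => ((S (P i)) * Q j).trace with hB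
    -- traces of P and Q are 1
    have htrP : ∀ i, (P i).trace = 1 := by
      intro i
      have h : star (v i) ⬝ᵥ v i = 1 := by simpa using hv i i
      rw [hP]
      simp only [Matrix.trace, Matrix.diag, Matrix.vecMulVec_apply, Pi.star_apply]
      rw [← h]
      simp only [dotProduct, Pi.star_apply]
      exact Finset.sum_congr rfl fun a _ => mul_comm _ _
    have htrQ : ∀ j, (Q j).trace = 1 := by
      intro j
      have h : star (w j) ⬝ᵥ w j = 1 := by simpa using hw j j
      rw [hQ]
      simp only [Matrix.trace, Matrix.diag, Matrix.vecMulVec_apply, Pi.star_apply]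
      rw [← h]
      simp only [dotProduct, Pi.star_apply]
      exact Finset.sum_congr rfl fun a _ => mul_comm _ _
    -- entries are nonneg reals
    have hBpos : ∀ i j, 0 ≤ B i j := by
      intro i j
      show (0:ℂ) ≤ (S (Matrix.vecMulVec (v i) (star (v i))) *
        Matrix.vecMulVec (w j) (star (w j))).trace
      rw [trace_mul_vecMulVec']
      exact (hSpos _ (vecMulVec_posSemidef' (v i))).dotProduct_mulVec_nonneg (w j)
    have hBre : ∀ i j, B i j = ((B i j).re : ℂ) := by
      intro i j
      have h := hBpos i j
      rw [Complex.le_def] at h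
      refine Complex.ext ?_ ?_
      · simp
      · simpa using h.2.symm
    -- row sums
    have hrow : ∀ i, ∑ j, B i j = (Real.sqrt m : ℂ) * (Real.sqrt k : ℂ)⁻¹ := by
      intro i
      have h1 : ∑ j, B i j = (S (P i)).trace := by
        rw [hB]
        simp only [Matrix.of_apply]
        rw [← Matrix.trace_sum, ← Matrix.mul_sum, sum_vecMulVec_eq_one' w hw, mul_one]
      have h2 := hDS.2 (P i)
      simp only [htrP] at h2
      rw [h1]
      field_simp at h2
      exact (eq_mul_inv_iff_mul_eq₀ hskC).mpr h2
    -- column sums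
    have hS1 : S 1 = ((Real.sqrt k : ℂ) * (Real.sqrt m : ℂ)⁻¹) • 1 := by
      have h := hDS.1
      rw [show (fun X => S X) ((Real.sqrt k : ℂ)⁻¹ • 1) = (Real.sqrt k : ℂ)⁻¹ • S 1 from
        _root_.map_smul S _ _] at h
      calc S 1 = (Real.sqrt k : ℂ) • ((Real.sqrt k : ℂ)⁻¹ • S 1) := by
            rw [smul_smul, mul_inv_cancel₀ hskC, one_smul]
        _ = (Real.sqrt k : ℂ) • ((Real.sqrt m : ℂ)⁻¹ • (1 : Matrix (Fin m) (Fin m) ℂ)) := by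
            rw [h]
        _ = _ := by rw [smul_smul]
    have hcol : ∀ j, ∑ i, B i j = (Real.sqrt k : ℂ) * (Real.sqrt m : ℂ)⁻¹ := by
      intro j
      rw [hB]
      simp only [Matrix.of_apply]
      rw [← Matrix.trace_sum, ← Matrix.sum_mul, ← map_sum, sum_vecMulVec_eq_one' v hv, hS1,
        Matrix.smul_mul, Matrix.trace_smul, one_mul, htrQ, smul_eq_mul, mul_one]
    -- the scaled real matrix is doubly stochastic
    set c : ℝ := Real.sqrt k * Real.sqrt m with hcdef
    have hc : (0:ℝ) < c := mul_pos hsk hsm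
    set N : Matrix (Fin k × Fin m) (Fin k × Fin m) ℝ :=
      Matrix.of fun p q => (B p.1 q.2).re / c with hN
    have hNds : N ∈ doublyStochastic ℝ (Fin k × Fin m) := by
      rw [mem_doublyStochastic_iff_sum]
      refine ⟨fun p q => div_nonneg ?_ hc.le, ?_, ?_⟩
      · have h := hBpos p.1 q.2
        rw [Complex.le_def] at h
        simpa using h.1
      · intro p
        have hsum : ∑ q : Fin k × Fin m, (B p.1 q.2).re = (k : ℝ) * (∑ b, (B p.1 b).re) := by
          rw [Fintype.sum_prod_type]
          simp [Finset.sum_const, Finset.card_univ, nsmul_eq_mul]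
        have hre : ∑ b, (B p.1 b).re = Real.sqrt m * (Real.sqrt k)⁻¹ := by
          have h := congrArg Complex.re (hrow p.1)
          rw [Complex.re_sum] at h
          rw [h, show ((Real.sqrt m : ℂ) * (Real.sqrt k : ℂ)⁻¹)
            = ((Real.sqrt m * (Real.sqrt k)⁻¹ : ℝ) : ℂ) from by push_cast; ring,
            Complex.ofReal_re]
        have hkk : Real.sqrt k * Real.sqrt k = (k:ℝ) := Real.mul_self_sqrt (by positivity)
        calc ∑ q : Fin k × Fin m, N p q = (∑ q : Fin k × Fin m, (B p.1 q.2).re) / c := by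
              rw [hN, Finset.sum_div]
              rfl
          _ = 1 := by
              rw [hsum, hre, hcdef, div_eq_one_iff_eq (by positivity)]
              field_simp
              linear_combination (-1 : ℝ) * hkk
      · intro q
        have hsum : ∑ p : Fin k × Fin m, (B p.1 q.2).re = (m : ℝ) * (∑ a, (B a q.2).re) := by
          rw [Fintype.sum_prod_type]
          rw [Finset.sum_comm]
          simp [Finset.sum_const, Finset.card_univ, nsmul_eq_mul, Finset.mul_sum]
        have hre : ∑ a, (B a q.2).re = Real.sqrt k * (Real.sqrt m)⁻¹ := by
          have h := congrArg Complex.re (hcol q.2)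
          rw [Complex.re_sum] at h
          rw [h, show ((Real.sqrt k : ℂ) * (Real.sqrt m : ℂ)⁻¹)
            = ((Real.sqrt k * (Real.sqrt m)⁻¹ : ℝ) : ℂ) from by push_cast; ring,
            Complex.ofReal_re]
        have hmm : Real.sqrt m * Real.sqrt m = (m:ℝ) := Real.mul_self_sqrt (by positivity)
        calc ∑ p : Fin k × Fin m, N p q = (∑ p : Fin k × Fin m, (B p.1 q.2).re) / c := by
              rw [hN, Finset.sum_div]
              rfl
          _ = 1 := by
              rw [hsum, hre, hcdef, div_eq_one_iff_eq (by positivity)]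
              field_simp
              linear_combination (-1 : ℝ) * hmm
    obtain ⟨hex, htot⟩ := ds_support' hNds
    have hNB : ∀ (i : Fin k) (j : Fin m), N (i, j) ((i, j)) = (B i j).re / c := fun _ _ => rfl
    have hBne : ∀ (i : Fin k) (j : Fin m) (p : Fin k × Fin m) (q : Fin k × Fin m),
        True := fun _ _ _ _ => trivial
    -- helper: N entry nonzero iff B entry nonzero
    have hNiff : ∀ (p q : Fin k × Fin m), N p q ≠ 0 ↔ B p.1 q.2 ≠ 0 := by
      intro p q
      constructor
      · intro h hB0
        apply h
        show (B p.1 q.2).re / c = 0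
        rw [hB0]
        simp
      · intro h h0
        apply h
        rw [hBre p.1 q.2]
        have h2 : (B p.1 q.2).re / c = 0 := h0
        rw [div_eq_zero_iff] at h2
        rcases h2 with h2 | h2
        · rw [h2]; simp
        · exact absurd h2 hc.ne'
    constructor
    · -- existence of an everywhere-nonzero diagonal
      obtain ⟨τ, hτ⟩ := hex
      refine ⟨τ.trans (Equiv.prodComm (Fin k) (Fin m)), fun p => ?_⟩
      have := (hNiff p (τ p)).mp (hτ p)
      simpa [hB, hP, hQ] using this
    · -- total support
      intro p q hpq
      have hpq' : N p (q.2, q.1) ≠ 0 := (hNiff p (q.2, q.1)).mpr hpq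
      obtain ⟨τ, hτp, hτ⟩ := htot p (q.2, q.1) hpq'
      refine ⟨τ.trans (Equiv.prodComm (Fin k) (Fin m)), ?_, ?_⟩
      · simp [hτp]
      · rw [Finset.prod_ne_zero_iff]
        intro i _
        have := (hNiff i (τ i)).mp (hτ i)
        simpa [kronOnes] using this
  refine ⟨fun v w hv hw => (main v w hv hw).2, ?_⟩
  intro A hApsd
  classical
  have hA : A.IsHermitian := hApsd.1
  have hSApsd : (S A).PosSemidef := hSpos A hApsd
  have hSA : (S A).IsHermitian := hSApsd.1
  set lam : Fin k → ℝ := hA.eigenvalues with hlam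
  set mu : Fin m → ℝ := hSA.eigenvalues with hmu
  set v : Fin k → Fin k → ℂ := fun i => ⇑(hA.eigenvectorBasis i) with hvdef
  set w : Fin m → Fin m → ℂ := fun j => ⇑(hSA.eigenvectorBasis j) with hwdef
  have hv : ∀ i j, star (v i) ⬝ᵥ v j = if i = j then 1 else 0 := by
    have h := hA.eigenvectorBasis.orthonormal
    rw [orthonormal_iff_ite] at h
    intro i j
    have h2 := h i j
    rw [EuclideanSpace.inner_eq_star_dotProduct] at h2
    rw [dotProduct_comm]
    exact h2
  have hw : ∀ i j, star (w i) ⬝ᵥ w j = if i = j then 1 else 0 := by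
    have h := hSA.eigenvectorBasis.orthonormal
    rw [orthonormal_iff_ite] at h
    intro i j
    have h2 := h i j
    rw [EuclideanSpace.inner_eq_star_dotProduct] at h2
    rw [dotProduct_comm]
    exact h2
  set B : Matrix (Fin k) (Fin m) ℂ := Matrix.of fun i j =>
    ((S (Matrix.vecMulVec (v i) (star (v i)))) *
      Matrix.vecMulVec (w j) (star (w j))).trace with hBdef
  have hBpos : ∀ i j, 0 ≤ B i j := by
    intro i j
    show (0:ℂ) ≤ (S (Matrix.vecMulVec (v i) (star (v i))) *
      Matrix.vecMulVec (w j) (star (w j))).trace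
    rw [trace_mul_vecMulVec']
    exact (hSpos _ (vecMulVec_posSemidef' (v i))).dotProduct_mulVec_nonneg (w j)
  have hBre : ∀ i j, B i j = ((B i j).re : ℂ) := by
    intro i j
    have h := hBpos i j
    rw [Complex.le_def] at h
    refine Complex.ext ?_ ?_
    · simp
    · simpa using h.2.symm
  have hdecomp : A = ∑ c, ((lam c : ℝ) : ℂ) • Matrix.vecMulVec (v c) (star (v c)) := by
    conv_lhs => rw [hA.spectral_theorem, Unitary.conjStarAlgAut_apply]
    rw [Matrix.star_eq_conjTranspose, unitary_diag_decomp']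
    rfl
  have hSAdecomp : S A = ∑ c, ((lam c : ℝ) : ℂ) •
      S (Matrix.vecMulVec (v c) (star (v c))) := by
    conv_lhs => rw [hdecomp]
    rw [map_sum]
    simp only [_root_.map_smul]
  have hSAw : ∀ j, (S A) *ᵥ (w j) = ((mu j : ℝ) : ℂ) • w j := by
    intro j
    have h := hSA.mulVec_eigenvectorBasis j
    rw [show ((w j : Fin m → ℂ)) = ⇑(hSA.eigenvectorBasis j) from rfl]
    rw [h]
    funext a
    simp [Complex.real_smul, hmu]
  have key1 : ∀ j, ∑ i, ((lam i : ℝ) : ℂ) * B i j = ((mu j : ℝ) : ℂ) := by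
    intro j
    have hq : ∀ i, ((lam i : ℝ) : ℂ) * B i j =
        ((((lam i : ℝ) : ℂ) • S (Matrix.vecMulVec (v i) (star (v i)))) *
          Matrix.vecMulVec (w j) (star (w j))).trace := by
      intro i
      rw [Matrix.smul_mul, Matrix.trace_smul, smul_eq_mul]
      rfl
    calc ∑ i, ((lam i : ℝ) : ℂ) * B i j
        = ∑ i, ((((lam i : ℝ) : ℂ) • S (Matrix.vecMulVec (v i) (star (v i)))) *
            Matrix.vecMulVec (w j) (star (w j))).trace := Finset.sum_congr rfl fun i _ => hq i
      _ = ((∑ i, ((lam i : ℝ) : ℂ) • S (Matrix.vecMulVec (v i) (star (v i)))) *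
            Matrix.vecMulVec (w j) (star (w j))).trace := by
            rw [← Matrix.trace_sum, ← Matrix.sum_mul]
      _ = ((S A) * Matrix.vecMulVec (w j) (star (w j))).trace := by rw [← hSAdecomp]
      _ = star (w j) ⬝ᵥ ((S A) *ᵥ w j) := trace_mul_vecMulVec' _ _
      _ = ((mu j : ℝ) : ℂ) * (star (w j) ⬝ᵥ w j) := by
            rw [hSAw j, dotProduct_smul, smul_eq_mul]
      _ = ((mu j : ℝ) : ℂ) := by
            have h : star (w j) ⬝ᵥ w j = 1 := by simpa using hw j j
            rw [h, mul_one]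
  have key2 : ∀ i j, lam i ≠ 0 → mu j = 0 → B i j = 0 := by
    intro i j hli hmj
    have h0 : ∑ i', ((lam i' : ℝ) : ℂ) * B i' j = 0 := by
      rw [key1 j, hmj]
      simp
    have hsumre : ∑ i', lam i' * (B i' j).re = 0 := by
      have h := congrArg Complex.re h0
      rw [Complex.re_sum] at h
      simpa [Complex.re_ofReal_mul] using h
    have hterm : ∀ i' ∈ Finset.univ, 0 ≤ lam i' * (B i' j).re := by
      intro i' _
      refine mul_nonneg (hApsd.eigenvalues_nonneg i') ?_
      have h := hBpos i' j
      rw [Complex.le_def] at h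
      simpa using h.1
    have h := (Finset.sum_eq_zero_iff_of_nonneg hterm).mp hsumre i (Finset.mem_univ i)
    rcases mul_eq_zero.mp h with h | h
    · exact absurd h hli
    · rw [hBre i j, h]
      simp
  obtain ⟨σ, hσ⟩ := (main v w hv hw).1
  set I : Finset (Fin k) := Finset.univ.filter (fun i => lam i ≠ 0) with hI
  set J : Finset (Fin m) := Finset.univ.filter (fun j => mu j ≠ 0) with hJ
  have hsub : ∀ p ∈ I ×ˢ (Finset.univ : Finset (Fin m)),
      σ p ∈ J ×ˢ (Finset.univ : Finset (Fin k)) := by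
    intro p hp
    rw [Finset.mem_product] at hp ⊢
    refine ⟨?_, Finset.mem_univ _⟩
    rw [hJ, Finset.mem_filter]
    refine ⟨Finset.mem_univ _, ?_⟩
    intro hmu0
    have hlamne : lam p.1 ≠ 0 := by
      have := hp.1
      rw [hI, Finset.mem_filter] at this
      exact this.2
    exact hσ p (key2 p.1 (σ p).1 hlamne hmu0)
  have hcard : (I ×ˢ (Finset.univ : Finset (Fin m))).card ≤
      (J ×ˢ (Finset.univ : Finset (Fin k))).card :=
    Finset.card_le_card_of_injOn (fun p => σ p) hsub (σ.injective.injOn)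
  rw [Finset.card_product, Finset.card_product, Finset.card_univ, Finset.card_univ,
    Fintype.card_fin, Fintype.card_fin] at hcard
  have hrA : A.rank = I.card := by
    rw [hA.rank_eq_card_non_zero_eigs, Fintype.card_subtype]
  have hrS : (S A).rank = J.card := by
    rw [hSA.rank_eq_card_non_zero_eigs, Fintype.card_subtype]
  rw [hrA, hrS]
  exact hcard
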